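/- Let k ≥ 3 be an integer and set n := 4k + 2. Let G be the graph obtained from two vertex-disjoint complete graphs, each on 2k + 1 vertices, by adding a matching of size 2 between them (two disjoint edges, each having one endpoint in each clique). Then G is Hamiltonian, δ(G) = 2k = n/2 − 1, and G contains no 2-factor consisting of exactly two cycles of lengths 2k + 2 and 2k. -/

import Mathlib

/-- `C` is a Hamilton cycle on its (whole) vertex set: a connected 2-regular graph. -/
def IsHamCycleOn {V : Type*} (C : SimpleGraph V) : Prop :=
  C.Connected ∧ ∀ v : V, (C.neighborSet v).ncard = 2

/-- `H` is a 2-factor of `G`: a spanning 2-regular subgraph of `G`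
(viewed as a graph on the same vertex set). -/
def IsTwoFactor {V : Type*} (G H : SimpleGraph V) : Prop :=
  H ≤ G ∧ ∀ v : V, (H.neighborSet v).ncard = 2

/-- The base relation for the example graph: two disjoint cliques of order `2k+1`
(the two summands), joined by the matching `{(inl 0, inr 0), (inl 1, inr 1)}`. -/
def exRel (k : ℕ) : (Fin (2 * k + 1) ⊕ Fin (2 * k + 1)) →
    (Fin (2 * k + 1) ⊕ Fin (2 * k + 1)) → Prop
  | Sum.inl _, Sum.inl _ => True
  | Sum.inr _, Sum.inr _ => True
  | Sum.inl a, Sum.inr b => (a.val = 0 ∧ b.val = 0) ∨ (a.val = 1 ∧ b.val = 1)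
  | Sum.inr _, Sum.inl _ => False

/-- The example graph: two disjoint copies of `K_{2k+1}` joined by a matching of size 2. -/
def exGraph (k : ℕ) : SimpleGraph (Fin (2 * k + 1) ⊕ Fin (2 * k + 1)) :=
  SimpleGraph.fromRel (exRel k)


lemma exGraph_adj_ll (k : ℕ) (a b : Fin (2*k+1)) :
    (exGraph k).Adj (Sum.inl a) (Sum.inl b) ↔ a ≠ b := by
  simp [exGraph, SimpleGraph.fromRel_adj, exRel]

lemma exGraph_adj_rr (k : ℕ) (a b : Fin (2*k+1)) :
    (exGraph k).Adj (Sum.inr a) (Sum.inr b) ↔ a ≠ b := by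
  simp [exGraph, SimpleGraph.fromRel_adj, exRel]

lemma exGraph_adj_lr (k : ℕ) (a b : Fin (2*k+1)) :
    (exGraph k).Adj (Sum.inl a) (Sum.inr b) ↔
      ((a.val = 0 ∧ b.val = 0) ∨ (a.val = 1 ∧ b.val = 1)) := by
  simp [exGraph, SimpleGraph.fromRel_adj, exRel]

lemma exGraph_adj_rl (k : ℕ) (a b : Fin (2*k+1)) :
    (exGraph k).Adj (Sum.inr b) (Sum.inl a) ↔
      ((a.val = 0 ∧ b.val = 0) ∨ (a.val = 1 ∧ b.val = 1)) := by
  rw [SimpleGraph.adj_comm]; exact exGraph_adj_lr k a b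

lemma fin_step {n : ℕ} (u v : Fin (n+2)) (h : (v - u).val = 1) :
    v.val = u.val + 1 ∨ (v.val = 0 ∧ u.val = n+1) := by
  have hu := u.isLt; have hv := v.isLt
  rw [Fin.sub_def] at h
  simp only [Fin.val_mk] at h
  rcases Nat.lt_or_ge (n + 2 - u.val + v.val) (n+2) with hlt | hge
  · rw [Nat.mod_eq_of_lt hlt] at h; omega
  · rw [Nat.mod_eq_sub_mod hge, Nat.mod_eq_of_lt (by omega)] at h; omega

lemma walk_cross {V : Type*} {H : SimpleGraph V} {P : V → Prop} :
    ∀ {u v : V}, H.Walk u v → P u → ¬ P v →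
      ∃ x y, H.Adj x y ∧ P x ∧ ¬ P y ∧ H.Reachable u x := by
  intro u v p
  induction p with
  | nil => intro h1 h2; exact absurd h1 h2
  | @cons a w v h q ih =>
    intro h1 h2
    by_cases hw : P w
    · obtain ⟨x, y, hxy, hx, hy, hr⟩ := ih hw h2
      exact ⟨x, y, hxy, hx, hy, (h.reachable).trans hr⟩
    · exact ⟨_, _, h, h1, hw, SimpleGraph.Reachable.refl _⟩

lemma even_sum_filter_card {α : Type*} [DecidableEq α] {r : α → α → Prop} [DecidableRel r]
    (hsym : Symmetric r) (hirr : Irreflexive r) (A : Finset α) :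
    Even (∑ a ∈ A, (A.filter (r a)).card) := by
  have hrw : ∑ a ∈ A, (A.filter (r a)).card
      = ((A ×ˢ A).filter fun p => r p.1 p.2).card := by
    simp only [Finset.card_filter, Finset.sum_product]
  rw [hrw]
  have hdvd : (2:ℕ) ∣ ((A ×ˢ A).filter fun p => r p.1 p.2).card := by
    rw [← ZMod.natCast_eq_zero_iff]
    rw [Finset.card_eq_sum_ones, Nat.cast_sum]
    refine Finset.sum_involution (fun p _ => p.swap) ?_ ?_ ?_ ?_
    · intro a ha; decide
    · intro a ha hne heq
      rw [Finset.mem_filter] at ha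
      have : a.2 = a.1 := congrArg Prod.fst heq
      exact hirr a.1 (this ▸ ha.2)
    · intro a ha
      rw [Finset.mem_filter, Finset.mem_product] at ha ⊢
      exact ⟨⟨ha.1.2, ha.1.1⟩, hsym ha.2⟩
    · intro a ha; exact Prod.swap_swap a
  obtain ⟨t, ht⟩ := hdvd
  exact ⟨t, by omega⟩

lemma bnd1 (k v : ℕ) (h : v ≤ 2*k) :
    (if v = 0 then 0 else if v = 2*k then 1 else v+1) < 2*k+1 := by split_ifs <;> omega
lemma bnd2 (k v : ℕ) (h1 : ¬ v ≤ 2*k) (h2 : v < 4*k+2) :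
    (if v = 4*k+1 then 0 else v - 2*k) < 2*k+1 := by split_ifs <;> omega

def hamFun (k : ℕ) (i : Fin (4*k+2)) : Fin (2*k+1) ⊕ Fin (2*k+1) :=
  if h : i.val ≤ 2*k then Sum.inl ⟨_, bnd1 k i.val h⟩
  else Sum.inr ⟨_, bnd2 k i.val h i.isLt⟩

lemma hamFun_inj (k : ℕ) : Function.Injective (hamFun k) := by
  intro i j hij
  have hi := i.isLt; have hj := j.isLt
  rw [Fin.ext_iff]
  unfold hamFun at hij
  by_cases hci : i.val ≤ 2*k <;> by_cases hcj : j.val ≤ 2*k <;>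
    [rw [dif_pos hci, dif_pos hcj] at hij;
     rw [dif_pos hci, dif_neg hcj] at hij;
     rw [dif_neg hci, dif_pos hcj] at hij;
     rw [dif_neg hci, dif_neg hcj] at hij] <;>
    (try simp only [Sum.inl.injEq, Sum.inr.injEq, Fin.mk.injEq, reduceCtorEq] at hij) <;>
    (repeat' split_ifs at hij) <;>
    omega

lemma hamFun_adj (k : ℕ) (hk : 3 ≤ k) (u v : Fin (4*k+2))
    (h : v.val = u.val + 1 ∨ (v.val = 0 ∧ u.val = 4*k+1)) :
    (exGraph k).Adj (hamFun k u) (hamFun k v) := by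
  have hu := u.isLt; have hv := v.isLt
  unfold hamFun
  by_cases hci : u.val ≤ 2*k <;> by_cases hcj : v.val ≤ 2*k <;>
    [rw [dif_pos hci, dif_pos hcj]; rw [dif_pos hci, dif_neg hcj];
     rw [dif_neg hci, dif_pos hcj]; rw [dif_neg hci, dif_neg hcj]] <;>
    simp only [exGraph_adj_ll, exGraph_adj_rr, exGraph_adj_lr, exGraph_adj_rl, Ne,
      Fin.ext_iff, Fin.val_mk] <;>
    (repeat' split_ifs) <;>
    first
    | omega
    | exact not_false

lemma part1 (k : ℕ) (hk : 3 ≤ k) :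
    ∃ C : SimpleGraph (Fin (2*k+1) ⊕ Fin (2*k+1)),
      C ≤ exGraph k ∧ (C.Connected ∧ ∀ v, (C.neighborSet v).ncard = 2) := by
  obtain ⟨m, hm⟩ : ∃ m, 4*k+2 = m+3 := ⟨4*k-1, by omega⟩
  haveI : NeZero (m+3) := ⟨by omega⟩
  set f : Fin (m+3) → (Fin (2*k+1) ⊕ Fin (2*k+1)) :=
    fun i => hamFun k (Fin.cast hm.symm i) with hf
  have hfinj : Function.Injective f := by
    intro a b hab
    have := hamFun_inj k hab
    simpa [Fin.ext_iff] using congrArg Fin.val this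
  have hfbij : Function.Bijective f := by
    rw [Fintype.bijective_iff_injective_and_card]
    refine ⟨hfinj, by simp; omega⟩
  set e : Fin (m+3) ≃ (Fin (2*k+1) ⊕ Fin (2*k+1)) := Equiv.ofBijective f hfbij with he
  set Gc := SimpleGraph.cycleGraph (m+3) with hGc
  refine ⟨SimpleGraph.map e.toEmbedding Gc, ?_, ?_, ?_⟩
  · rw [SimpleGraph.map_le_iff_le_comap]
    intro u v huv
    rw [SimpleGraph.comap_adj]
    rw [SimpleGraph.cycleGraph_adj'] at huv
    have key : ∀ x y : Fin (m+3), (y - x).val = 1 →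
        (exGraph k).Adj (e.toEmbedding x) (e.toEmbedding y) := by
      intro x y hxy
      have hstep := fin_step (n := m+1) x y hxy
      refine hamFun_adj k hk _ _ ?_
      simp only [Fin.coe_cast]
      omega
    rcases huv with h | h
    · exact (key v u h).symm
    · exact key u v h
  · refine SimpleGraph.Connected.map (SimpleGraph.Embedding.map e.toEmbedding Gc).toHom ?_ ?_
    · intro w
      exact ⟨e.symm w, by simp [SimpleGraph.Embedding.map]⟩
    · exact SimpleGraph.cycleGraph_connected (n := m+2)
  · intro x
    obtain ⟨v, rfl⟩ : ∃ v, e v = x := ⟨e.symm x, by simp⟩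
    have hset : (SimpleGraph.map e.toEmbedding Gc).neighborSet (e v)
        = e '' (Gc.neighborSet v) := by
      ext w
      simp only [SimpleGraph.mem_neighborSet, SimpleGraph.map_adj, Set.mem_image]
      constructor
      · rintro ⟨a, b, hab, ha, rfl⟩
        have : a = v := e.injective ha
        subst this
        exact ⟨b, hab, rfl⟩
      · rintro ⟨b, hb, rfl⟩
        exact ⟨v, b, hb, rfl, rfl⟩
    rw [hset, Set.ncard_image_of_injective _ e.injective]
    rw [hGc, SimpleGraph.cycleGraph_neighborSet (n := m+1)]
    refine Set.ncard_pair ?_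
    intro hEq
    have h1 : v - 1 + 1 - v = (0 : Fin (m+3)) := by abel
    have h2 : v + 1 + 1 - v = (1 : Fin (m+3)) + 1 := by abel
    have h3 : (0 : Fin (m+3)) = 1 + 1 := by rw [← h1, ← h2, hEq]
    have h4 := congrArg Fin.val h3
    rw [Fin.val_zero, Fin.val_add, Fin.val_one'] at h4
    have e1 : (1:ℕ) % (m+3) = 1 := Nat.mod_eq_of_lt (by omega)
    rw [e1] at h4
    rw [Nat.mod_eq_of_lt (show 1+1 < m+3 by omega)] at h4 
    omega

lemma ncard_ne_set (k : ℕ) (a : Fin (2*k+1)) : {b : Fin (2*k+1) | a ≠ b}.ncard = 2*k := by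
  have h1 : {b : Fin (2*k+1) | a ≠ b} = ↑(Finset.univ.erase a) := by
    ext b; simp [ne_comm]
  rw [h1, Set.ncard_coe_finset, Finset.card_erase_of_mem (Finset.mem_univ a)]
  simp

lemma part2a (k : ℕ) (hk : 3 ≤ k) (x : Fin (2*k+1) ⊕ Fin (2*k+1)) :
    2*k ≤ ((exGraph k).neighborSet x).ncard := by
  cases x with
  | inl a =>
    have hsub : Sum.inl '' {b | a ≠ b} ⊆ (exGraph k).neighborSet (Sum.inl a) := by
      rintro _ ⟨b, hb, rfl⟩
      exact (exGraph_adj_ll k a b).mpr hb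
    calc 2*k = (Sum.inl '' {b : Fin (2*k+1) | a ≠ b}).ncard := by
              rw [Set.ncard_image_of_injective _ Sum.inl_injective, ncard_ne_set]
      _ ≤ _ := Set.ncard_le_ncard hsub (Set.toFinite _)
  | inr a =>
    have hsub : Sum.inr '' {b | a ≠ b} ⊆ (exGraph k).neighborSet (Sum.inr a) := by
      rintro _ ⟨b, hb, rfl⟩
      exact (exGraph_adj_rr k a b).mpr hb
    calc 2*k = (Sum.inr '' {b : Fin (2*k+1) | a ≠ b}).ncard := by
              rw [Set.ncard_image_of_injective _ Sum.inr_injective, ncard_ne_set]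
      _ ≤ _ := Set.ncard_le_ncard hsub (Set.toFinite _)

lemma part2b (k : ℕ) (hk : 3 ≤ k) :
    ∃ x, ((exGraph k).neighborSet x).ncard = 2*k := by
  refine ⟨Sum.inl ⟨2, by omega⟩, ?_⟩
  have hset : (exGraph k).neighborSet (Sum.inl ⟨2, by omega⟩)
      = Sum.inl '' {b : Fin (2*k+1) | (⟨2, by omega⟩ : Fin (2*k+1)) ≠ b} := by
    ext w
    cases w with
    | inl b =>
      simp only [SimpleGraph.mem_neighborSet, exGraph_adj_ll, Set.mem_image, Set.mem_setOf_eq]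
      constructor
      · intro hb; exact ⟨b, hb, rfl⟩
      · rintro ⟨b', hb', heq⟩
        obtain rfl : b' = b := Sum.inl_injective heq
        exact hb'
    | inr b =>
      simp only [SimpleGraph.mem_neighborSet, exGraph_adj_lr, Set.mem_image, Fin.val_mk]
      simp
  rw [hset, Set.ncard_image_of_injective _ Sum.inl_injective, ncard_ne_set]

lemma part3 (k : ℕ) (hk : 3 ≤ k) :
    ¬ ∃ H : SimpleGraph (Fin (2*k+1) ⊕ Fin (2*k+1)),
      (H ≤ exGraph k ∧ ∀ v, (H.neighborSet v).ncard = 2) ∧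
      Nat.card H.ConnectedComponent = 2 ∧
      ∃ c c' : H.ConnectedComponent, c ≠ c' ∧
        c.supp.ncard = 2*k+2 ∧ c'.supp.ncard = 2*k := by
  classical
  rintro ⟨H, ⟨hHG, hdeg⟩, hcard, c, c', hcc, hS, hS'⟩
  set z0 : Fin (2*k+1) := ⟨0, by omega⟩ with hz0
  set z1 : Fin (2*k+1) := ⟨1, by omega⟩ with hz1
  set l0 := Sum.inl z0 with hl0
  set l1 := Sum.inl z1 with hl1
  set r0 := Sum.inr z0 with hr0
  set r1 := Sum.inr z1 with hr1
  have hz01 : z0 ≠ z1 := by simp [hz0, hz1, Fin.ext_iff]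
  -- adjacency closure of supp
  have hcl : ∀ (d : H.ConnectedComponent) (v w), v ∈ d.supp → H.Adj v w → w ∈ d.supp := by
    intro d v w hv hvw
    rw [SimpleGraph.ConnectedComponent.mem_supp_iff] at hv ⊢
    rw [← hv]
    exact (SimpleGraph.ConnectedComponent.connectedComponentMk_eq_of_adj hvw).symm
  -- every vertex lies in c or c'
  have hall : ∀ v, v ∈ c.supp ∨ v ∈ c'.supp := by
    obtain ⟨x, y, hxy, hU⟩ := Nat.card_eq_two_iff.mp hcard
    intro v
    have hv : H.connectedComponentMk v ∈ ({x, y} : Set _) := hU ▸ Set.mem_univ _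
    have hc : c ∈ ({x, y} : Set _) := hU ▸ Set.mem_univ _
    have hc' : c' ∈ ({x, y} : Set _) := hU ▸ Set.mem_univ _
    simp only [Set.mem_insert_iff, Set.mem_singleton_iff] at hv hc hc'
    rw [SimpleGraph.ConnectedComponent.mem_supp_iff, SimpleGraph.ConnectedComponent.mem_supp_iff]
    rcases hc with rfl | rfl <;> rcases hc' with rfl | rfl <;> tauto
  have hdisj : ∀ v, v ∈ c.supp → v ∈ c'.supp → False := by
    intro v h1 h2
    rw [SimpleGraph.ConnectedComponent.mem_supp_iff] at h1 h2
    exact hcc (h1.symm.trans h2)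
  -- cross edges of H
  have hcross : ∀ a b, H.Adj (Sum.inl a) (Sum.inr b) →
      (a.val = 0 ∧ b.val = 0) ∨ (a.val = 1 ∧ b.val = 1) :=
    fun a b h => (exGraph_adj_lr k a b).mp (hHG h)
  -- a component containing vertices on both sides contains a cross edge
  have hcompcross : ∀ (d : H.ConnectedComponent) (a b : Fin (2*k+1)),
      Sum.inl a ∈ d.supp → Sum.inr b ∈ d.supp →
      ∃ a' b', H.Adj (Sum.inl a') (Sum.inr b') ∧ Sum.inl a' ∈ d.supp := by
    intro d a b ha hb
    have hr : H.Reachable (Sum.inl a) (Sum.inr b) := by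
      rw [SimpleGraph.ConnectedComponent.mem_supp_iff] at ha hb
      exact SimpleGraph.ConnectedComponent.exact (ha.trans hb.symm)
    obtain ⟨p⟩ := hr
    obtain ⟨x, y, hxy, hx, hy, hreach⟩ :=
      walk_cross (P := fun v => ∃ t, v = Sum.inl t) p ⟨a, rfl⟩ (by simp)
    obtain ⟨a', rfl⟩ := hx
    obtain ⟨b', rfl⟩ : ∃ b', y = Sum.inr b' := by
      cases y with
      | inl t => exact absurd ⟨t, rfl⟩ hy
      | inr t => exact ⟨t, rfl⟩
    refine ⟨a', b', hxy, ?_⟩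
    rw [SimpleGraph.ConnectedComponent.mem_supp_iff] at ha ⊢
    exact (SimpleGraph.ConnectedComponent.sound hreach).symm.trans ha
  have hcompcross' : ∀ (d : H.ConnectedComponent) (a b : Fin (2*k+1)),
      Sum.inl a ∈ d.supp → Sum.inr b ∈ d.supp →
      (H.Adj l0 r0 ∧ l0 ∈ d.supp) ∨ (H.Adj l1 r1 ∧ l1 ∈ d.supp) := by
    intro d a b ha hb
    obtain ⟨a', b', hadj, ha'⟩ := hcompcross d a b ha hb
    rcases hcross a' b' hadj with ⟨h1, h2⟩ | ⟨h1, h2⟩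
    · left
      have ha0 : a' = z0 := by rw [hz0]; exact Fin.ext h1
      have hb0 : b' = z0 := by rw [hz0]; exact Fin.ext h2
      subst ha0; subst hb0
      exact ⟨hadj, ha'⟩
    · right
      have ha0 : a' = z1 := by rw [hz1]; exact Fin.ext h1
      have hb0 : b' = z1 := by rw [hz1]; exact Fin.ext h2
      subst ha0; subst hb0
      exact ⟨hadj, ha'⟩
  -- range facts
  have hncardL : (Set.range (Sum.inl : Fin (2*k+1) → Fin (2*k+1) ⊕ Fin (2*k+1))).ncard = 2*k+1 := by
    rw [← Nat.card_coe_set_eq, Nat.card_range_of_injective Sum.inl_injective]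
    simp [Nat.card_eq_fintype_card]
  have hncardR : (Set.range (Sum.inr : Fin (2*k+1) → Fin (2*k+1) ⊕ Fin (2*k+1))).ncard = 2*k+1 := by
    rw [← Nat.card_coe_set_eq, Nat.card_range_of_injective Sum.inr_injective]
    simp [Nat.card_eq_fintype_card]
  -- c.supp has vertices on both sides
  have hcleft : ∃ a, Sum.inl a ∈ c.supp := by
    by_contra hno
    push_neg at hno
    have hsub : c.supp ⊆ Set.range Sum.inr := by
      intro v hv
      cases v with
      | inl a => exact absurd hv (hno a)
      | inr b => exact ⟨b, rfl⟩
    have := Set.ncard_le_ncard hsub (Set.toFinite _)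
    omega
  have hcright : ∃ b, Sum.inr b ∈ c.supp := by
    by_contra hno
    push_neg at hno
    have hsub : c.supp ⊆ Set.range Sum.inl := by
      intro v hv
      cases v with
      | inl a => exact ⟨a, rfl⟩
      | inr b => exact absurd hv (hno b)
    have := Set.ncard_le_ncard hsub (Set.toFinite _)
    omega
  obtain ⟨a₀, ha₀⟩ := hcleft
  obtain ⟨b₀, hb₀⟩ := hcright
  have hF := hcompcross' c a₀ b₀ ha₀ hb₀
  -- the finset of left indices of c.supp
  set A : Finset (Fin (2*k+1)) := Finset.univ.filter (fun a => Sum.inl a ∈ c.supp) with hA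
  have hAmem : ∀ a, a ∈ A ↔ Sum.inl a ∈ c.supp := by
    intro a; simp [hA]
  -- degree decomposition
  have hsplit : ∀ a ∈ A,
      (A.filter fun b => H.Adj (Sum.inl a) (Sum.inl b)).card
      + (Finset.univ.filter fun b => H.Adj (Sum.inl a) (Sum.inr b)).card = 2 := by
    intro a ha
    have h2 := hdeg (Sum.inl a)
    have hnb : H.neighborSet (Sum.inl a)
        = (Sum.inl '' {b | H.Adj (Sum.inl a) (Sum.inl b)})
          ∪ (Sum.inr '' {b | H.Adj (Sum.inl a) (Sum.inr b)}) := by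
      ext w
      cases w with
      | inl b => simp
      | inr b => simp
    rw [hnb, Set.ncard_union_eq ?hd (Set.toFinite _) (Set.toFinite _)] at h2
    case hd =>
      rw [Set.disjoint_left]
      rintro _ ⟨b, _, rfl⟩ ⟨b', _, h⟩
      simp at h
    rw [Set.ncard_image_of_injective _ Sum.inl_injective,
      Set.ncard_image_of_injective _ Sum.inr_injective] at h2
    have e1 : {b | H.Adj (Sum.inl a) (Sum.inl b)}.ncard
        = (A.filter fun b => H.Adj (Sum.inl a) (Sum.inl b)).card := by
      rw [← Set.ncard_coe_finset]
      congr 1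
      ext b
      simp only [Finset.coe_filter, Set.mem_setOf_eq, hAmem, Finset.mem_univ, true_and]
      constructor
      · intro hb; exact ⟨hcl c _ _ ((hAmem a).mp ha) hb, hb⟩
      · intro hb; exact hb.2
    have e2 : {b | H.Adj (Sum.inl a) (Sum.inr b)}.ncard
        = (Finset.univ.filter fun b => H.Adj (Sum.inl a) (Sum.inr b)).card := by
      rw [← Set.ncard_coe_finset]
      congr 1
      ext b
      simp
    rw [e1, e2] at h2
    exact h2
  -- parity of the left-left part
  have heven := even_sum_filter_card (r := fun a b => H.Adj (Sum.inl a) (Sum.inl b))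
    (fun a b h => h.symm) (fun a h => H.loopless.irrefl _ h) A
  -- total sum
  have htot : ∑ a ∈ A, ((A.filter fun b => H.Adj (Sum.inl a) (Sum.inl b)).card
      + (Finset.univ.filter fun b => H.Adj (Sum.inl a) (Sum.inr b)).card) = 2 * A.card := by
    rw [Finset.sum_congr rfl hsplit, Finset.sum_const, smul_eq_mul, mul_comm]
  rw [Finset.sum_add_distrib] at htot
  have hEvenR : (∑ a ∈ A, (Finset.univ.filter fun b => H.Adj (Sum.inl a) (Sum.inr b)).card) % 2 = 0 := by
    rw [Nat.even_iff] at heven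
    omega
  -- exact value of each right part
  have hnR : ∀ a : Fin (2*k+1),
      (Finset.univ.filter fun b => H.Adj (Sum.inl a) (Sum.inr b)).card
      = (if a = z0 then (if H.Adj l0 r0 then 1 else 0) else 0)
        + (if a = z1 then (if H.Adj l1 r1 then 1 else 0) else 0) := by
    intro a
    by_cases h0 : a = z0
    · subst h0
      rw [if_pos rfl, if_neg hz01]
      by_cases hAdj : H.Adj l0 r0
      · rw [if_pos hAdj]
        have hfe : (Finset.univ.filter fun b => H.Adj (Sum.inl z0) (Sum.inr b)) = {z0} := by
          ext b
          simp only [Finset.mem_filter, Finset.mem_univ, true_and, Finset.mem_singleton]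
          constructor
          · intro hb
            rcases hcross z0 b hb with ⟨h1, h2⟩ | ⟨h1, h2⟩
            · exact Fin.ext (by rw [h2]; try rfl)
            · exact absurd h1 (by simp [hz0])
          · rintro rfl
            exact hAdj
        rw [hfe]
        simp
      · rw [if_neg hAdj]
        have hfe : (Finset.univ.filter fun b => H.Adj (Sum.inl z0) (Sum.inr b)) = ∅ := by
          ext b
          simp only [Finset.mem_filter, Finset.mem_univ, true_and, Finset.notMem_empty,
            iff_false]
          intro hb
          rcases hcross z0 b hb with ⟨h1, h2⟩ | ⟨h1, h2⟩
          · have : b = z0 := Fin.ext (by rw [h2]; try rfl)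
            subst this
            exact hAdj hb
          · exact absurd h1 (by simp [hz0])
        rw [hfe]
        simp
    · rw [if_neg h0]
      by_cases h1 : a = z1
      · subst h1
        rw [if_pos rfl]
        by_cases hAdj : H.Adj l1 r1
        · rw [if_pos hAdj]
          have hfe : (Finset.univ.filter fun b => H.Adj (Sum.inl z1) (Sum.inr b)) = {z1} := by
            ext b
            simp only [Finset.mem_filter, Finset.mem_univ, true_and, Finset.mem_singleton]
            constructor
            · intro hb
              rcases hcross z1 b hb with ⟨h1, h2⟩ | ⟨h1, h2⟩
              · exact absurd h1 (by simp [hz1])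
              · exact Fin.ext (by rw [h2]; try rfl)
            · rintro rfl
              exact hAdj
          rw [hfe]
          simp
        · rw [if_neg hAdj]
          have hfe : (Finset.univ.filter fun b => H.Adj (Sum.inl z1) (Sum.inr b)) = ∅ := by
            ext b
            simp only [Finset.mem_filter, Finset.mem_univ, true_and, Finset.notMem_empty,
              iff_false]
            intro hb
            rcases hcross z1 b hb with ⟨h1, h2⟩ | ⟨h1, h2⟩
            · exact absurd h1 (by simp [hz1])
            · have : b = z1 := Fin.ext (by rw [h2]; try rfl)
              subst this
              exact hAdj hb
          rw [hfe]
          simp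
      · rw [if_neg h1, add_zero]
        have hfe : (Finset.univ.filter fun b => H.Adj (Sum.inl a) (Sum.inr b)) = ∅ := by
          ext b
          simp only [Finset.mem_filter, Finset.mem_univ, true_and, Finset.notMem_empty,
            iff_false]
          intro hb
          rcases hcross a b hb with ⟨hx, _⟩ | ⟨hx, _⟩
          · exact h0 (Fin.ext (by rw [hx]; try rfl))
          · exact h1 (Fin.ext (by rw [hx]; try rfl))
        rw [hfe]
        simp
  have hTsum : ∑ a ∈ A, (Finset.univ.filter fun b => H.Adj (Sum.inl a) (Sum.inr b)).card
      = (if z0 ∈ A then (if H.Adj l0 r0 then 1 else 0) else 0)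
        + (if z1 ∈ A then (if H.Adj l1 r1 then 1 else 0) else 0) := by
    rw [Finset.sum_congr rfl (fun a _ => hnR a), Finset.sum_add_distrib,
      Finset.sum_ite_eq' A z0 (fun _ => if H.Adj l0 r0 then 1 else 0),
      Finset.sum_ite_eq' A z1 (fun _ => if H.Adj l1 r1 then 1 else 0)]
  rw [hTsum] at hEvenR
  have hF' : (H.Adj l0 r0 ∧ z0 ∈ A) ∨ (H.Adj l1 r1 ∧ z1 ∈ A) := by
    rcases hF with ⟨h1, h2⟩ | ⟨h1, h2⟩
    · exact Or.inl ⟨h1, (hAmem z0).mpr h2⟩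
    · exact Or.inr ⟨h1, (hAmem z1).mpr h2⟩
  have hfull : H.Adj l0 r0 ∧ z0 ∈ A ∧ H.Adj l1 r1 ∧ z1 ∈ A := by
    split_ifs at hEvenR <;>
      first
        | (exact ⟨by assumption, by assumption, by assumption, by assumption⟩)
        | omega
        | tauto
  have hl0S : l0 ∈ c.supp := (hAmem z0).mp hfull.2.1
  have hl1S : l1 ∈ c.supp := (hAmem z1).mp hfull.2.2.2
  have hr0S : r0 ∈ c.supp := hcl c l0 r0 hl0S hfull.1
  have hr1S : r1 ∈ c.supp := hcl c l1 r1 hl1S hfull.2.2.1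
  -- now analyze c'
  by_cases hl : ∃ a, Sum.inl a ∈ c'.supp
  · by_cases hr : ∃ b, Sum.inr b ∈ c'.supp
    · obtain ⟨a, ha⟩ := hl
      obtain ⟨b, hb⟩ := hr
      rcases hcompcross' c' a b ha hb with ⟨_, h⟩ | ⟨_, h⟩
      · exact hdisj l0 hl0S h
      · exact hdisj l1 hl1S h
    · push_neg at hr
      have hsub : insert l0 (insert l1 (Set.range Sum.inr)) ⊆ c.supp := by
        intro w hw
        simp only [Set.mem_insert_iff, Set.mem_range] at hw
        rcases hw with rfl | rfl | ⟨b, rfl⟩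
        · exact hl0S
        · exact hl1S
        · rcases hall (Sum.inr b) with h | h
          · exact h
          · exact absurd h (hr b)
      have hn1 : l1 ∉ Set.range (Sum.inr : Fin (2*k+1) → Fin (2*k+1) ⊕ Fin (2*k+1)) := by
        simp [hl1]
      have hn0 : l0 ∉ insert l1 (Set.range (Sum.inr : Fin (2*k+1) → Fin (2*k+1) ⊕ Fin (2*k+1))) := by
        simp only [Set.mem_insert_iff, Set.mem_range, hl0, hl1]
        push_neg
        refine ⟨by simpa using hz01, fun b => by simp⟩
      have hcard3 : (insert l0 (insert l1 (Set.range (Sum.inr : Fin (2*k+1) → Fin (2*k+1) ⊕ Fin (2*k+1))))).ncard = 2*k+3 := by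
        rw [Set.ncard_insert_of_notMem hn0 (Set.toFinite _),
          Set.ncard_insert_of_notMem hn1 (Set.toFinite _), hncardR]
      have hle := Set.ncard_le_ncard hsub (Set.toFinite _)
      omega
  · push_neg at hl
    have hsub : insert r0 (insert r1 (Set.range Sum.inl)) ⊆ c.supp := by
      intro w hw
      simp only [Set.mem_insert_iff, Set.mem_range] at hw
      rcases hw with rfl | rfl | ⟨b, rfl⟩
      · exact hr0S
      · exact hr1S
      · rcases hall (Sum.inl b) with h | h
        · exact h
        · exact absurd h (hl b)
    have hn1 : r1 ∉ Set.range (Sum.inl : Fin (2*k+1) → Fin (2*k+1) ⊕ Fin (2*k+1)) := by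
      simp [hr1]
    have hn0 : r0 ∉ insert r1 (Set.range (Sum.inl : Fin (2*k+1) → Fin (2*k+1) ⊕ Fin (2*k+1))) := by
      simp only [Set.mem_insert_iff, Set.mem_range, hr0, hr1]
      push_neg
      refine ⟨by simpa using hz01, fun b => by simp⟩
    have hcard3 : (insert r0 (insert r1 (Set.range (Sum.inl : Fin (2*k+1) → Fin (2*k+1) ⊕ Fin (2*k+1))))).ncard = 2*k+3 := by
      rw [Set.ncard_insert_of_notMem hn0 (Set.toFinite _),
        Set.ncard_insert_of_notMem hn1 (Set.toFinite _), hncardL]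
    have hle := Set.ncard_le_ncard hsub (Set.toFinite _)
    omega


theorem stmt17 (k : ℕ) (hk : 3 ≤ k) :
    -- G is Hamiltonian
    (∃ C : SimpleGraph (Fin (2 * k + 1) ⊕ Fin (2 * k + 1)),
      C ≤ exGraph k ∧ IsHamCycleOn C) ∧
    -- δ(G) = 2k = n/2 - 1, where n = 4k + 2
    ((∀ x, 2 * k ≤ ((exGraph k).neighborSet x).ncard) ∧
      (∃ x, ((exGraph k).neighborSet x).ncard = 2 * k) ∧
      2 * k = (4 * k + 2) / 2 - 1) ∧
    -- G has no 2-factor consisting of exactly two cycles of lengths 2k+2 and 2k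
    ¬ ∃ H : SimpleGraph (Fin (2 * k + 1) ⊕ Fin (2 * k + 1)),
        IsTwoFactor (exGraph k) H ∧ Nat.card H.ConnectedComponent = 2 ∧
        ∃ c c' : H.ConnectedComponent, c ≠ c' ∧
          c.supp.ncard = 2 * k + 2 ∧ c'.supp.ncard = 2 * k := by
  refine ⟨?_, ⟨part2a k hk, part2b k hk, by omega⟩, ?_⟩
  · obtain ⟨C, h1, h2, h3⟩ := part1 k hk
    exact ⟨C, h1, h2, h3⟩
  · rintro ⟨H, hTF, hcard, c, c', hcc, h1, h2⟩
    exact part3 k hk ⟨H, ⟨hTF.1, hTF.2⟩, hcard, c, c', hcc, h1, h2⟩
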